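/- arXiv:1511.01353 — 2 statements merged into one kernel-verified Lean document; each statement's English description precedes it below -/
import Mathlib

section
/- For all vectors x = (x₁,x₂,x₃) and y = (y₁,y₂,y₃) in ℝ³, exp(−‖x−y‖²/2) = Σ_{(l,m,n)∈ℕ³} (y₁^l·y₂^m·y₃^n)/(l!·m!·n!) · h_l(x₁)·h_m(x₂)·h_n(x₃), where the family indexed by ℕ³ is (absolutely) summable and ‖·‖ is the Euclidean norm on ℝ³. -/
/-- Probabilists' Hermite polynomials evaluated over ℝ. -/
noncomputable def He (n : ℕ) (x : ℝ) : ℝ := Polynomial.aeval x (Polynomial.hermite n)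

/-- Hermite functions `h n x = exp (-x^2/2) * He n x`. -/
noncomputable def hermiteFun (n : ℕ) (x : ℝ) : ℝ := Real.exp (-x ^ 2 / 2) * He n x

open Finset Polynomial
open scoped Nat

lemma He_eq_sum' (n : ℕ) (x : ℝ) :
    (Polynomial.aeval x (Polynomial.hermite n) : ℝ)
      = ∑ m ∈ Finset.range (n + 1), ((Polynomial.hermite n).coeff m : ℝ) * x ^ m := by
  rw [Polynomial.aeval_def, Polynomial.eval₂_eq_sum_range]
  simp [Polynomial.natDegree_hermite]

lemma two_mul_fact (k : ℕ) : (2 * k)! = 2 ^ k * k ! * (2 * k - 1)‼ := by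
  cases k with
  | zero => simp
  | succ m =>
    have h1 : 2 * (m + 1) = (2 * m + 1) + 1 := by ring
    rw [h1, Nat.factorial_eq_mul_doubleFactorial]
    have h2 : 2 * m + 1 + 1 = 2 * (m + 1) := by ring
    have h3 : 2 * m + 1 = 2 * (m + 1) - 1 := by omega
    rw [h2, Nat.doubleFactorial_two_mul, ← h3]

lemma coeff_hermite_real (n k : ℕ) (h : 2 * k ≤ n) :
    ((Polynomial.hermite n).coeff (n - 2 * k) : ℝ)
      = (-1) ^ k * (n ! : ℝ) / ((n - 2 * k)! * (k ! * 2 ^ k)) := by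
  have hn : 2 * k + (n - 2 * k) = n := by omega
  have hc := Polynomial.coeff_hermite_explicit k (n - 2 * k)
  rw [hn] at hc
  rw [hc]
  push_cast
  rw [Nat.cast_choose ℝ (show n - 2 * k ≤ n by omega)]
  have h2 : n - (n - 2 * k) = 2 * k := by omega
  rw [h2]
  have hdd : ((2 * k - 1)‼ : ℝ) * (2 ^ k * k !) = (2 * k)! := by
    have := two_mul_fact k
    push_cast [this]
    ring
  have f1 : ((n - 2 * k)! : ℝ) ≠ 0 := Nat.cast_ne_zero.2 (Nat.factorial_ne_zero _)
  have f2 : ((2 * k)! : ℝ) ≠ 0 := Nat.cast_ne_zero.2 (Nat.factorial_ne_zero _)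
  have f3 : (k ! : ℝ) ≠ 0 := Nat.cast_ne_zero.2 (Nat.factorial_ne_zero _)
  have f4 : (2 : ℝ) ^ k ≠ 0 := by positivity
  field_simp
  linear_combination hdd

lemma fiber_sum (x y : ℝ) (n : ℕ) :
    ∑ k ∈ Finset.range (n / 2 + 1),
        (x * y) ^ (n - 2 * k) / (n - 2 * k)! * ((-(y ^ 2) / 2) ^ k / k !)
      = y ^ n / n ! * He n x := by
  set F : ℕ → ℝ := fun m => ((Polynomial.hermite n).coeff m : ℝ) * x ^ m * y ^ n / n ! with hF
  have step1 : ∀ k ∈ Finset.range (n / 2 + 1),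
      (x * y) ^ (n - 2 * k) / (n - 2 * k)! * ((-(y ^ 2) / 2) ^ k / k !) = F (n - 2 * k) := by
    intro k hk
    have hkn : 2 * k ≤ n := by
      have := Finset.mem_range.1 hk
      omega
    have hy : y ^ (n - 2 * k) * (y ^ 2) ^ k = y ^ n := by
      rw [← pow_mul, ← pow_add]
      congr 1
      omega
    have f1 : ((n - 2 * k)! : ℝ) ≠ 0 := Nat.cast_ne_zero.2 (Nat.factorial_ne_zero _)
    have f3 : (k ! : ℝ) ≠ 0 := Nat.cast_ne_zero.2 (Nat.factorial_ne_zero _)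
    have f5 : (n ! : ℝ) ≠ 0 := Nat.cast_ne_zero.2 (Nat.factorial_ne_zero _)
    simp only [hF, coeff_hermite_real n k hkn]
    rw [mul_pow, neg_div, neg_pow, div_pow]
    field_simp
    linear_combination x ^ (n - 2 * k) * hy
  rw [Finset.sum_congr rfl step1]
  have hinj : ∀ a ∈ Finset.range (n / 2 + 1), ∀ b ∈ Finset.range (n / 2 + 1),
      n - 2 * a = n - 2 * b → a = b := by
    intro a ha b hb hab
    have := Finset.mem_range.1 ha
    have := Finset.mem_range.1 hb
    omega
  rw [← Finset.sum_image hinj]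
  have hsub : (Finset.range (n / 2 + 1)).image (fun k => n - 2 * k) ⊆ Finset.range (n + 1) := by
    intro m hm
    simp only [Finset.mem_image, Finset.mem_range] at hm ⊢
    omega
  have hzero : ∀ m ∈ Finset.range (n + 1),
      m ∉ (Finset.range (n / 2 + 1)).image (fun k => n - 2 * k) → F m = 0 := by
    intro m hm hnot
    have hmn := Finset.mem_range.1 hm
    simp only [Finset.mem_image, Finset.mem_range] at hnot
    push_neg at hnot
    have hodd : Odd (n + m) := by
      rcases Nat.even_or_odd (n + m) with he | ho
      · exfalso
        rcases he with ⟨t, ht⟩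
        have hk : n - 2 * ((n - m) / 2) = m := by omega
        exact absurd hk (hnot ((n - m) / 2) (by omega))
      · exact ho
    simp only [hF, Polynomial.coeff_hermite_of_odd_add hodd]
    simp
  rw [Finset.sum_subset hsub hzero, He, He_eq_sum']
  rw [Finset.mul_sum]
  refine Finset.sum_congr rfl fun m _ => ?_
  simp only [hF]
  ring


noncomputable def gAux (x y : ℝ) (p : ℕ × ℕ) : ℝ :=
  if 2 * p.2 ≤ p.1 then (x * y) ^ (p.1 - 2 * p.2) / ((p.1 - 2 * p.2)! : ℝ) *
    ((-(y ^ 2) / 2) ^ p.2 / (p.2 ! : ℝ)) else 0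

lemma gAux_of_le (x y : ℝ) {n k : ℕ} (h : 2 * k ≤ n) :
    gAux x y (n, k) = (x * y) ^ (n - 2 * k) / ((n - 2 * k)! : ℝ) *
      ((-(y ^ 2) / 2) ^ k / (k ! : ℝ)) := if_pos h

lemma gAux_of_gt (x y : ℝ) {n k : ℕ} (h : ¬ 2 * k ≤ n) : gAux x y (n, k) = 0 := if_neg h

set_option maxHeartbeats 1000000 in
lemma oneDim' (x y : ℝ) :
    HasSum (fun n : ℕ => y ^ n / n ! * He n x)
      (Real.exp (x * y) * Real.exp (-(y ^ 2) / 2)) := by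
  have hA : HasSum (fun m : ℕ => (x * y) ^ m / m !) (Real.exp (x * y)) := by
    rw [Real.exp_eq_exp_ℝ]
    exact NormedSpace.expSeries_div_hasSum_exp (x * y)
  have hB : HasSum (fun k : ℕ => (-(y ^ 2) / 2) ^ k / k !) (Real.exp (-(y ^ 2) / 2)) := by
    rw [Real.exp_eq_exp_ℝ]
    exact NormedSpace.expSeries_div_hasSum_exp (-(y ^ 2) / 2)
  have hA' : Summable fun m : ℕ => ‖(x * y) ^ m / (m ! : ℝ)‖ := by
    simp only [Real.norm_eq_abs]
    exact summable_abs_iff.2 hA.summable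
  have hB' : Summable fun k : ℕ => ‖(-(y ^ 2) / 2) ^ k / (k ! : ℝ)‖ := by
    simp only [Real.norm_eq_abs]
    exact summable_abs_iff.2 hB.summable
  have hg : HasSum (fun p : ℕ × ℕ => (x * y) ^ p.1 / (p.1 ! : ℝ) *
      ((-(y ^ 2) / 2) ^ p.2 / (p.2 ! : ℝ)))
      (Real.exp (x * y) * Real.exp (-(y ^ 2) / 2)) :=
    hA.mul hB (summable_mul_of_summable_norm hA' hB')
  have hj : Function.Injective (fun p : ℕ × ℕ => (p.1 + 2 * p.2, p.2)) := by
    intro a b hab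
    simp only [Prod.mk.injEq] at hab
    exact Prod.ext (by omega) hab.2
  have hcomp : (gAux x y ∘ fun p : ℕ × ℕ => (p.1 + 2 * p.2, p.2))
      = fun p : ℕ × ℕ => (x * y) ^ p.1 / (p.1 ! : ℝ) *
        ((-(y ^ 2) / 2) ^ p.2 / (p.2 ! : ℝ)) := by
    funext p
    have h1 : p.1 + 2 * p.2 - 2 * p.2 = p.1 := by omega
    simp only [Function.comp_apply, gAux_of_le x y (show 2 * p.2 ≤ p.1 + 2 * p.2 by omega), h1]
  have hzero : ∀ p ∉ Set.range (fun p : ℕ × ℕ => (p.1 + 2 * p.2, p.2)), gAux x y p = 0 := by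
    intro p hp
    apply gAux_of_gt
    intro hle
    refine hp ⟨(p.1 - 2 * p.2, p.2), ?_⟩
    have h1 : p.1 - 2 * p.2 + 2 * p.2 = p.1 := by omega
    simp [h1]
  have hg'sum : HasSum (gAux x y) (Real.exp (x * y) * Real.exp (-(y ^ 2) / 2)) := by
    rw [← Function.Injective.hasSum_iff hj hzero, hcomp]
    exact hg
  have hfib : ∀ n : ℕ, HasSum (fun k => gAux x y (n, k)) (y ^ n / n ! * He n x) := by
    intro n
    have h1 : HasSum (fun k => gAux x y (n, k))
        (∑ k ∈ Finset.range (n / 2 + 1), gAux x y (n, k)) :=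
      hasSum_sum_of_ne_finset_zero fun k hk =>
        gAux_of_gt x y (by simp only [Finset.mem_range] at hk; omega)
    have h2 : ∑ k ∈ Finset.range (n / 2 + 1), gAux x y (n, k) = y ^ n / n ! * He n x := by
      rw [← fiber_sum x y n]
      refine Finset.sum_congr rfl fun k hk => ?_
      exact gAux_of_le x y (by simp only [Finset.mem_range] at hk; omega)
    rwa [h2] at h1
  exact hg'sum.prod_fiberwise hfib

lemma oneDimFun (x y : ℝ) :
    HasSum (fun n : ℕ => y ^ n / n ! * hermiteFun n x) (Real.exp (-(x - y) ^ 2 / 2)) := by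
  have h := (oneDim' x y).mul_left (Real.exp (-x ^ 2 / 2))
  have hval : Real.exp (-x ^ 2 / 2) * (Real.exp (x * y) * Real.exp (-(y ^ 2) / 2))
      = Real.exp (-(x - y) ^ 2 / 2) := by
    rw [← Real.exp_add, ← Real.exp_add]
    congr 1
    ring
  rw [hval] at h
  have hfun : (fun n : ℕ => Real.exp (-x ^ 2 / 2) * (y ^ n / n ! * He n x))
      = fun n : ℕ => y ^ n / n ! * hermiteFun n x := by
    funext n
    rw [hermiteFun]
    ring
  rwa [hfun] at h

set_option maxHeartbeats 2000000 in
/-- Three-dimensional expansion of the Gaussian RBF kernel in Hermite functions: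
for `x, y ∈ ℝ³` (with the Euclidean norm),
`exp (-‖x-y‖²/2) = ∑_{(l,m,n)} (y₁^l y₂^m y₃^n)/(l! m! n!) * h l x₁ * h m x₂ * h n x₃`,
the family over `ℕ³` being absolutely summable. -/
theorem gaussian_kernel_hermite_expansion_3d (x y : EuclideanSpace ℝ (Fin 3)) :
    Summable (fun p : ℕ × ℕ × ℕ =>
      |y 0 ^ p.1 * y 1 ^ p.2.1 * y 2 ^ p.2.2 /
          ((p.1.factorial : ℝ) * (p.2.1.factorial : ℝ) * (p.2.2.factorial : ℝ)) *
        (hermiteFun p.1 (x 0) * hermiteFun p.2.1 (x 1) * hermiteFun p.2.2 (x 2))|) ∧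
    HasSum (fun p : ℕ × ℕ × ℕ =>
        y 0 ^ p.1 * y 1 ^ p.2.1 * y 2 ^ p.2.2 /
            ((p.1.factorial : ℝ) * (p.2.1.factorial : ℝ) * (p.2.2.factorial : ℝ)) *
          (hermiteFun p.1 (x 0) * hermiteFun p.2.1 (x 1) * hermiteFun p.2.2 (x 2)))
      (Real.exp (-‖x - y‖ ^ 2 / 2)) := by
  have h0 := oneDimFun (x 0) (y 0)
  have h1 := oneDimFun (x 1) (y 1)
  have h2 := oneDimFun (x 2) (y 2)
  have n0 : Summable fun n : ℕ => ‖y 0 ^ n / (n ! : ℝ) * hermiteFun n (x 0)‖ := by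
    simp only [Real.norm_eq_abs]
    exact summable_abs_iff.2 h0.summable
  have n1 : Summable fun n : ℕ => ‖y 1 ^ n / (n ! : ℝ) * hermiteFun n (x 1)‖ := by
    simp only [Real.norm_eq_abs]
    exact summable_abs_iff.2 h1.summable
  have n2 : Summable fun n : ℕ => ‖y 2 ^ n / (n ! : ℝ) * hermiteFun n (x 2)‖ := by
    simp only [Real.norm_eq_abs]
    exact summable_abs_iff.2 h2.summable
  have h12 := h1.mul h2 (summable_mul_of_summable_norm n1 n2)
  have n12 := n1.mul_norm n2
  have hall := h0.mul h12 (summable_mul_of_summable_norm n0 n12)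
  have hfun : (fun p : ℕ × ℕ × ℕ =>
        y 0 ^ p.1 * y 1 ^ p.2.1 * y 2 ^ p.2.2 /
            ((p.1.factorial : ℝ) * (p.2.1.factorial : ℝ) * (p.2.2.factorial : ℝ)) *
          (hermiteFun p.1 (x 0) * hermiteFun p.2.1 (x 1) * hermiteFun p.2.2 (x 2)))
      = fun p : ℕ × ℕ × ℕ =>
          (y 0 ^ p.1 / (p.1 ! : ℝ) * hermiteFun p.1 (x 0)) *
            ((y 1 ^ p.2.1 / (p.2.1 ! : ℝ) * hermiteFun p.2.1 (x 1)) *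
              (y 2 ^ p.2.2 / (p.2.2 ! : ℝ) * hermiteFun p.2.2 (x 2))) := by
    funext p
    ring
  have hnorm : ‖x - y‖ ^ 2 = (x 0 - y 0) ^ 2 + (x 1 - y 1) ^ 2 + (x 2 - y 2) ^ 2 := by
    rw [EuclideanSpace.norm_eq, Real.sq_sqrt (by positivity)]
    simp [Fin.sum_univ_three, Real.norm_eq_abs, sq_abs]
  have hval : Real.exp (-‖x - y‖ ^ 2 / 2)
      = Real.exp (-(x 0 - y 0) ^ 2 / 2) *
        (Real.exp (-(x 1 - y 1) ^ 2 / 2) * Real.exp (-(x 2 - y 2) ^ 2 / 2)) := by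
    rw [hnorm, ← Real.exp_add, ← Real.exp_add]
    congr 1
    ring
  constructor
  · rw [summable_abs_iff, hfun]
    exact hall.summable
  · rw [hfun, hval]
    exact hall
end

section
/- For all vectors x = (x₁,x₂,x₃) and y = (y₁,y₂,y₃) in ℝ³, exp(−‖x−y‖²/2) = Σ_{(l,m,n)∈ℕ³} Σ_{(l',m',n')∈ℕ³} Λ_{lmn}(y) · Λ_{l'm'n'}(x) · (−1)^{l'+m'+n'} · He_{l+l'}(0) · He_{m+m'}(0) · He_{n+n'}(0), where both families are (absolutely) summable, so the double sum may be taken in either order. (Fully factored Vandermonde form of the Gaussian RBF kernel.) -/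
/-- Geometric moments `Λ_{lmn}(x) = x₁^l x₂^m x₃^n / (l! m! n!)` on `ℝ³`. -/
noncomputable def geomMoment (p : ℕ × ℕ × ℕ) (x : EuclideanSpace ℝ (Fin 3)) : ℝ :=
  x 0 ^ p.1 * x 1 ^ p.2.1 * x 2 ^ p.2.2 /
    ((p.1.factorial : ℝ) * (p.2.1.factorial : ℝ) * (p.2.2.factorial : ℝ))

open Finset Polynomial

open scoped Nat

lemma He_apply_zero (n : ℕ) : He n 0 = ((Polynomial.hermite n).coeff 0 : ℝ) := by
  simp [He, Polynomial.aeval_def, Polynomial.eval₂_at_zero]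

lemma He_odd (n : ℕ) (h : Odd n) : He n 0 = 0 := by
  rw [He_apply_zero, Polynomial.coeff_hermite_of_odd_add (by simpa using h)]
  simp

lemma factorial_two_mul (k : ℕ) : (2*k)! = 2^k * k ! * (2*k-1)‼ := by
  cases k with
  | zero => rfl
  | succ k =>
    have h1 : 2*(k+1) = (2*k+1)+1 := by ring
    rw [h1, Nat.factorial_eq_mul_doubleFactorial]
    rw [show 2*k+1+1 = 2*(k+1) from by ring, Nat.doubleFactorial_two_mul,
      show 2*(k+1)-1 = 2*k+1 from by omega]

lemma He_two_mul (k : ℕ) : He (2*k) 0 = (-1)^k * ((2*k-1)‼ : ℝ) := by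
  rw [He_apply_zero]
  have h := Polynomial.coeff_hermite_explicit k 0
  rw [add_zero] at h
  rw [h]
  push_cast
  simp

lemma hasSum_series (t u : ℝ) (c : ℕ → ℝ) (hodd : ∀ n, Odd n → c n = 0)
    (heven : ∀ k, c (2*k) * t^(2*k) / (2*k)! = u^k / k !) :
    HasSum (fun n => c n * t^n / n !) (Real.exp u) := by
  have h0 : HasSum (fun k : ℕ => u^k / (k ! : ℝ)) (Real.exp u) := by
    rw [Real.exp_eq_exp_ℝ]; exact NormedSpace.expSeries_div_hasSum_exp u
  have hinj : Function.Injective (fun k : ℕ => 2*k) := fun a b h => by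
    dsimp at h; omega
  rw [← Function.Injective.hasSum_iff hinj ?_]
  · have he : ((fun n => c n * t^n / n !) ∘ (fun k : ℕ => 2*k)) = fun k => u^k / (k ! : ℝ) :=
      funext heven
    rw [he]; exact h0
  · intro n hn
    have hodd' : Odd n := by
      rcases Nat.even_or_odd n with he | ho
      · obtain ⟨m, hm⟩ := he
        exact absurd ⟨m, by dsimp; omega⟩ hn
      · exact ho
    simp [hodd n hodd']

lemma hasSum_he (t : ℝ) : HasSum (fun n => He n 0 * t ^ n / n !) (Real.exp (-t^2 / 2)) := by
  apply hasSum_series t (-t^2/2) _ He_odd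
  intro k
  have hD : ((2*k)! : ℝ) = 2^k * k ! * ((2*k-1)‼ : ℝ) := by
    exact_mod_cast congrArg (Nat.cast : ℕ → ℝ) (factorial_two_mul k)
  have hpow : (-t^2/2)^k = (-1)^k * t^(2*k) / 2^k := by
    rw [div_pow, neg_pow, pow_mul]
  rw [He_two_mul, hD, hpow]
  have h1 : ((2*k-1)‼ : ℝ) ≠ 0 := by positivity
  have h2 : (k ! : ℝ) ≠ 0 := by positivity
  field_simp

lemma hasSum_absHe (t : ℝ) : HasSum (fun n => |He n 0| * t ^ n / n !) (Real.exp (t^2 / 2)) := by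
  apply hasSum_series t (t^2/2) _ (fun n hn => by rw [He_odd n hn, abs_zero])
  intro k
  have hD : ((2*k)! : ℝ) = 2^k * k ! * ((2*k-1)‼ : ℝ) := by
    exact_mod_cast congrArg (Nat.cast : ℕ → ℝ) (factorial_two_mul k)
  have habs : |He (2*k) 0| = ((2*k-1)‼ : ℝ) := by
    rw [He_two_mul, abs_mul, abs_pow, abs_neg, abs_one, one_pow, one_mul, Nat.abs_cast]
  have hpow : (t^2/2)^k = t^(2*k) / 2^k := by rw [div_pow, pow_mul]
  rw [habs, hD, hpow]
  have h1 : ((2*k-1)‼ : ℝ) ≠ 0 := by positivity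
  have h2 : (k ! : ℝ) ≠ 0 := by positivity
  field_simp

lemma fiber_sum_s9 (a b c : ℝ) (n : ℕ) :
    ∑ p ∈ Finset.HasAntidiagonal.antidiagonal n, a^p.1 * b^p.2 / ((p.1 ! : ℝ) * p.2 !) * c
      = c * (a+b)^n / n ! := by
  rw [Finset.Nat.sum_antidiagonal_eq_sum_range_succ_mk, add_pow, Finset.mul_sum,
    Finset.sum_div]
  apply Finset.sum_congr rfl
  intro k hk
  have hkn : k ≤ n := Nat.lt_succ_iff.mp (Finset.mem_range.mp hk)
  rw [Nat.cast_choose ℝ hkn]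
  have h1 : (k ! : ℝ) ≠ 0 := by positivity
  have h2 : ((n-k)! : ℝ) ≠ 0 := by positivity
  have h3 : (n ! : ℝ) ≠ 0 := by positivity
  field_simp

/-- 1D term. -/
noncomputable def F (a b : ℝ) (p : ℕ × ℕ) : ℝ :=
  a^p.1 * b^p.2 / ((p.1 ! : ℝ) * p.2 !) * ((-1:ℝ)^p.2 * He (p.1+p.2) 0)

lemma absF (a b : ℝ) (p : ℕ × ℕ) :
    |F a b p| = |a|^p.1 * |b|^p.2 / ((p.1 ! : ℝ) * p.2 !) * |He (p.1+p.2) 0| := by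
  simp [F, abs_mul, abs_div, abs_pow, Nat.abs_cast]

lemma oneD_summable (a b : ℝ) : Summable (fun p => |F a b p|) := by
  rw [← Finset.HasAntidiagonal.sigmaAntidiagonalEquivProd.summable_iff]
  have hc : ((fun p => |F a b p|) ∘ ⇑Finset.HasAntidiagonal.sigmaAntidiagonalEquivProd)
      = fun z : (Σ n : ℕ, Finset.HasAntidiagonal.antidiagonal n) => |F a b (z.2 : ℕ × ℕ)| := rfl
  rw [hc, summable_sigma_of_nonneg (fun _ => abs_nonneg _)]
  constructor
  · intro n; exact Summable.of_finite
  · have key : ∀ n : ℕ, (∑' y : (Finset.HasAntidiagonal.antidiagonal n : Finset (ℕ × ℕ)),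
        |F a b (y : ℕ × ℕ)|) = |He n 0| * (|a|+|b|)^n / n ! := by
      intro n
      rw [Finset.tsum_subtype (Finset.HasAntidiagonal.antidiagonal n) (fun p => |F a b p|)]
      have h : ∀ p ∈ Finset.HasAntidiagonal.antidiagonal n,
          |F a b p| = |a|^p.1 * |b|^p.2 / ((p.1 ! : ℝ) * p.2 !) * |He n 0| := by
        intro p hp
        rw [absF, Finset.HasAntidiagonal.mem_antidiagonal.mp hp]
      rw [Finset.sum_congr rfl h, fiber_sum_s9]
    simp only [key]
    exact (hasSum_absHe (|a|+|b|)).summable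

lemma oneD_hasSum (a b : ℝ) : HasSum (F a b) (Real.exp (-(a-b)^2 / 2)) := by
  have hs : Summable (F a b) := (oneD_summable a b).of_abs
  obtain ⟨S, hS⟩ := hs
  have hS' : HasSum ((F a b) ∘ ⇑Finset.HasAntidiagonal.sigmaAntidiagonalEquivProd) S :=
    (Equiv.hasSum_iff _).mpr hS
  have hfib : ∀ n : ℕ, HasSum
      (fun y : (Finset.HasAntidiagonal.antidiagonal n : Finset (ℕ × ℕ)) =>
        ((F a b) ∘ ⇑Finset.HasAntidiagonal.sigmaAntidiagonalEquivProd) ⟨n, y⟩)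
      (He n 0 * (a-b)^n / n !) := by
    intro n
    have h1 := hasSum_fintype
      (fun y : (Finset.HasAntidiagonal.antidiagonal n : Finset (ℕ × ℕ)) => F a b (y : ℕ × ℕ))
    have h2 : ∑ y : (Finset.HasAntidiagonal.antidiagonal n : Finset (ℕ × ℕ)), F a b (y : ℕ × ℕ)
        = He n 0 * (a-b)^n / n ! := by
      rw [Finset.sum_coe_sort (Finset.HasAntidiagonal.antidiagonal n) (F a b)]
      have h : ∀ p ∈ Finset.HasAntidiagonal.antidiagonal n,
          F a b p = a^p.1 * (-b)^p.2 / ((p.1 ! : ℝ) * p.2 !) * He n 0 := by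
        intro p hp
        rw [F, Finset.HasAntidiagonal.mem_antidiagonal.mp hp, neg_pow]
        ring
      rw [Finset.sum_congr rfl h, fiber_sum_s9, sub_eq_add_neg]
    rw [h2] at h1
    exact h1
  have hH : HasSum (fun n => He n 0 * (a-b)^n / n !) S := hS'.sigma hfib
  rwa [hH.unique (hasSum_he (a-b))] at hS

def e3 : ((ℕ×ℕ) × (ℕ×ℕ) × (ℕ×ℕ)) ≃ ((ℕ×ℕ×ℕ) × (ℕ×ℕ×ℕ)) where
  toFun r := ((r.1.1, r.2.1.1, r.2.2.1), (r.1.2, r.2.1.2, r.2.2.2))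
  invFun q := ((q.1.1, q.2.1), ((q.1.2.1, q.2.2.1), (q.1.2.2, q.2.2.2)))
  left_inv := fun _ => rfl
  right_inv := fun _ => rfl

lemma term_factor (x y : EuclideanSpace ℝ (Fin 3)) (l l' m m' n n' : ℕ) :
    geomMoment (l,m,n) y * geomMoment (l',m',n') x * (-1:ℝ)^(l'+m'+n') *
      He (l+l') 0 * He (m+m') 0 * He (n+n') 0
    = F (y 0) (x 0) (l,l') * (F (y 1) (x 1) (m,m') * F (y 2) (x 2) (n,n')) := by
  simp only [F, geomMoment, pow_add]
  ring

/-- Fully factored Vandermonde form of the Gaussian RBF kernel on `ℝ³`: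
`exp (-‖x-y‖²/2)` equals the (absolutely summable) double sum over
`(l,m,n), (l',m',n') ∈ ℕ³` of
`Λ_{lmn}(y) Λ_{l'm'n'}(x) (-1)^{l'+m'+n'} He_{l+l'}(0) He_{m+m'}(0) He_{n+n'}(0)`,
so the double sum may be taken in either order. -/
theorem gaussian_kernel_fully_factored (x y : EuclideanSpace ℝ (Fin 3)) :
    Summable (fun q : (ℕ × ℕ × ℕ) × (ℕ × ℕ × ℕ) =>
      |geomMoment q.1 y * geomMoment q.2 x * (-1 : ℝ) ^ (q.2.1 + q.2.2.1 + q.2.2.2) *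
        He (q.1.1 + q.2.1) 0 * He (q.1.2.1 + q.2.2.1) 0 * He (q.1.2.2 + q.2.2.2) 0|) ∧
    HasSum (fun q : (ℕ × ℕ × ℕ) × (ℕ × ℕ × ℕ) =>
        geomMoment q.1 y * geomMoment q.2 x * (-1 : ℝ) ^ (q.2.1 + q.2.2.1 + q.2.2.2) *
          He (q.1.1 + q.2.1) 0 * He (q.1.2.1 + q.2.2.1) 0 * He (q.1.2.2 + q.2.2.2) 0)
      (Real.exp (-‖x - y‖ ^ 2 / 2)) := by
  have hTG : ∀ r : (ℕ×ℕ) × (ℕ×ℕ) × (ℕ×ℕ),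
      geomMoment (e3 r).1 y * geomMoment (e3 r).2 x *
          (-1 : ℝ) ^ ((e3 r).2.1 + (e3 r).2.2.1 + (e3 r).2.2.2) *
          He ((e3 r).1.1 + (e3 r).2.1) 0 * He ((e3 r).1.2.1 + (e3 r).2.2.1) 0 *
          He ((e3 r).1.2.2 + (e3 r).2.2.2) 0
      = F (y 0) (x 0) r.1 * (F (y 1) (x 1) r.2.1 * F (y 2) (x 2) r.2.2) := by
    rintro ⟨⟨l, l'⟩, ⟨m, m'⟩, ⟨n, n'⟩⟩
    simp only [e3, Equiv.coe_fn_mk]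
    exact term_factor x y l l' m m' n n'
  have h23abs : Summable (fun s : (ℕ×ℕ) × (ℕ×ℕ) => |F (y 1) (x 1) s.1| * |F (y 2) (x 2) s.2|) := by
    apply Summable.mul_of_nonneg (oneD_summable (y 1) (x 1)) (oneD_summable (y 2) (x 2))
    · intro p; exact abs_nonneg _
    · intro p; exact abs_nonneg _
  have hGabs : Summable (fun r : (ℕ×ℕ) × (ℕ×ℕ) × (ℕ×ℕ) =>
      |F (y 0) (x 0) r.1| * (|F (y 1) (x 1) r.2.1| * |F (y 2) (x 2) r.2.2|)) := by
    apply Summable.mul_of_nonneg (oneD_summable (y 0) (x 0)) h23abs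
    · intro p; exact abs_nonneg _
    · intro p; exact mul_nonneg (abs_nonneg _) (abs_nonneg _)
  constructor
  · rw [← e3.summable_iff]
    refine hGabs.congr fun r => ?_
    simp only [Function.comp_apply]
    rw [hTG r, abs_mul, abs_mul]
  · have hGsum : Summable (fun r : (ℕ×ℕ) × (ℕ×ℕ) × (ℕ×ℕ) =>
        F (y 0) (x 0) r.1 * (F (y 1) (x 1) r.2.1 * F (y 2) (x 2) r.2.2)) := by
      apply Summable.of_abs
      refine hGabs.congr fun r => ?_
      rw [abs_mul, abs_mul]
    have h23sum : Summable (fun s : (ℕ×ℕ) × (ℕ×ℕ) => F (y 1) (x 1) s.1 * F (y 2) (x 2) s.2) := by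
      apply Summable.of_abs
      refine h23abs.congr fun s => ?_
      rw [abs_mul]
    have h23 : HasSum (fun s : (ℕ×ℕ) × (ℕ×ℕ) => F (y 1) (x 1) s.1 * F (y 2) (x 2) s.2)
        (Real.exp (-(y 1 - x 1)^2 / 2) * Real.exp (-(y 2 - x 2)^2 / 2)) := by
      exact HasSum.mul (oneD_hasSum (y 1) (x 1)) (oneD_hasSum (y 2) (x 2)) h23sum
    have hG : HasSum (fun r : (ℕ×ℕ) × (ℕ×ℕ) × (ℕ×ℕ) =>
        F (y 0) (x 0) r.1 * (F (y 1) (x 1) r.2.1 * F (y 2) (x 2) r.2.2))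
        (Real.exp (-(y 0 - x 0)^2 / 2) *
          (Real.exp (-(y 1 - x 1)^2 / 2) * Real.exp (-(y 2 - x 2)^2 / 2))) := by
      have key := HasSum.mul (oneD_hasSum (y 0) (x 0)) h23 (by exact hGsum)
      beta_reduce at key
      exact key
    have hval : Real.exp (-(y 0 - x 0)^2 / 2) *
          (Real.exp (-(y 1 - x 1)^2 / 2) * Real.exp (-(y 2 - x 2)^2 / 2))
        = Real.exp (-‖x - y‖ ^ 2 / 2) := by
      have hn : ‖x - y‖^2 = (x 0 - y 0)^2 + (x 1 - y 1)^2 + (x 2 - y 2)^2 := by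
        rw [EuclideanSpace.norm_eq, Real.sq_sqrt (by positivity)]
        simp [Fin.sum_univ_three, sq_abs]
      rw [hn, ← Real.exp_add, ← Real.exp_add]
      congr 1
      ring
    rw [← hval, ← e3.hasSum_iff]
    convert hG using 1
    funext r
    exact hTG r
end
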